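/- For every k >= 1 and every branch vertex b of G_k, there exists a proper k-coloring of G_k in which b is the unique vertex colored k and, for each i in {1,...,k-1}, the tree node at level i on the branch b receives color i. -/

import Mathlib

/-- A structured tree: a rooted tree together with, at each internal node,
a graph on its children. A `leaf` is a tree with a single (leaf) node; a
`node ι c g` has children indexed by `ι`, subtrees `c i`, and the graph `g`
on the children. -/
inductive STree : Type 1 where
  | leaf : STree
  | node : (ι : Type) → (ι → STree) → SimpleGraph ι → STree

namespace STree

/-- The type of nodes of a structured tree. -/
def NodeType : STree → Type
  | leaf => PUnit
  | node ι c _ => PUnit ⊕ Σ i : ι, NodeType (c i)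

/-- The type of branches (root-to-leaf paths) of a structured tree. -/
def Branch : STree → Type
  | leaf => PUnit
  | node _ c _ => Σ i, Branch (c i)

/-- The root of a structured tree, as a node. -/
def root : (t : STree) → t.NodeType
  | leaf => PUnit.unit
  | node _ _ _ => Sum.inl PUnit.unit

/-- `onBranch t b u` means that the node `u` lies on the branch `b`. -/
def onBranch : (t : STree) → t.Branch → t.NodeType → Prop
  | leaf, _, _ => True
  | node _ c _, ⟨i, b⟩, u =>
      match u with
      | Sum.inl _ => True
      | Sum.inr ⟨j, w⟩ => ∃ h : j = i, onBranch (c i) b (h ▸ w)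

/-- Adjacency between tree nodes in the realization: the union of the edges
of the graphs `g(v)` placed on the children of each internal node `v`
(tree edges are *not* included). -/
def treeAdj : (t : STree) → t.NodeType → t.NodeType → Prop
  | leaf, _, _ => False
  | node ι c g, u, v =>
      match u, v with
      | Sum.inr ⟨i, u'⟩, Sum.inr ⟨j, v'⟩ =>
          (∃ h : i = j, treeAdj (c j) (h ▸ u') v') ∨
          (g.Adj i j ∧ u' = root (c i) ∧ v' = root (c j))
      | _, _ => False

/-- The realization `R(T,g)` of a structured tree: its vertices are the tree
nodes together with the branches; edges are those of the graphs `g(v)`, plus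
an edge from each branch vertex to every tree node lying on that branch. -/
def realization (t : STree) : SimpleGraph (t.NodeType ⊕ t.Branch) :=
  SimpleGraph.fromRel (fun x y =>
    match x, y with
    | Sum.inl u, Sum.inl v => treeAdj t u v
    | Sum.inl u, Sum.inr b => onBranch t b u
    | Sum.inr b, Sum.inl u => onBranch t b u
    | Sum.inr _, Sum.inr _ => False)

/-- The level of a node (the root is at level 1). -/
def level : (t : STree) → t.NodeType → ℕ
  | leaf, _ => 1
  | node _ c _, u =>
      match u with
      | Sum.inl _ => 1
      | Sum.inr ⟨i, w⟩ => level (c i) w + 1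

/-- `IsInternalGraphOf t ⟨ι, g⟩` means that `g` is the graph attached to some
internal node of `t` (on its children, indexed by `ι`). -/
inductive IsInternalGraphOf : STree → (Σ ι : Type, SimpleGraph ι) → Prop where
  | here : ∀ (ι : Type) (c : ι → STree) (g : SimpleGraph ι),
      IsInternalGraphOf (node ι c g) ⟨ι, g⟩
  | child : ∀ (ι : Type) (c : ι → STree) (g : SimpleGraph ι) (i : ι) (p),
      IsInternalGraphOf (c i) p → IsInternalGraphOf (node ι c g) p

end STree

/-- Builds the structured tree in which all nodes at level `i` carry the
`i`-th graph of the list on their children (so the tree has `L.length + 1`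
levels). -/
def buildTree : List (Σ V : Type, SimpleGraph V) → STree
  | [] => .leaf
  | ⟨ι, g⟩ :: rest => .node ι (fun _ => buildTree rest) g

/-- The realization of a structured tree, packaged with its vertex type. -/
def realizationSigma (t : STree) : Σ V : Type, SimpleGraph V :=
  ⟨t.NodeType ⊕ t.Branch, t.realization⟩

/-- `twincutList m` is the list `[G₂, G₃, …, G_{m+1}]` of twincut graphs. -/
def twincutList : ℕ → List (Σ V : Type, SimpleGraph V)
  | 0 => []
  | m + 1 => twincutList m ++ [realizationSigma (buildTree (twincutList m))]

/-- The structured tree `T_{m+2}` whose realization is the twincut graph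
`G_{m+2}`: it has `m + 1` levels, and every node at level `i ≤ m` carries
the graph `G_{i+1}` on its children. -/
def twincutTree (m : ℕ) : STree := buildTree (twincutList m)

/-- The twincut graphs: `G 1` is the one-vertex graph, and for `k ≥ 2`,
`G k` is the realization of the structured tree `T_k`. -/
def twincutG : ℕ → Σ V : Type, SimpleGraph V
  | 0 => ⟨PUnit, ⊥⟩
  | 1 => ⟨PUnit, ⊥⟩
  | (m + 2) => realizationSigma (twincutTree m)


namespace STree

lemma tree_irrefl : ∀ (t : STree) (u : t.NodeType), ¬ t.treeAdj u u := by
  intro t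
  induction t with
  | leaf => intro u h; exact h
  | node ι c g ih =>
    rintro (u | ⟨i, u'⟩) h
    · exact h
    · rcases h with ⟨heq, h'⟩ | ⟨hadj, -, -⟩
      · exact ih i u' h'
      · exact g.irrefl hadj

lemma adj_of_treeAdj (t : STree) {u v : t.NodeType} (h : t.treeAdj u v) :
    t.realization.Adj (Sum.inl u) (Sum.inl v) := by
  rw [realization, SimpleGraph.fromRel_adj]
  refine ⟨?_, Or.inl h⟩
  intro he
  rw [Sum.inl.injEq] at he
  subst he
  exact tree_irrefl t u h

lemma adj_of_onBranch (t : STree) {b : t.Branch} {u : t.NodeType} (h : t.onBranch b u) :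
    t.realization.Adj (Sum.inl u) (Sum.inr b) := by
  rw [realization, SimpleGraph.fromRel_adj]
  exact ⟨Sum.inl_ne_inr, Or.inl h⟩

lemma properOfRel (t : STree) (c : (t.NodeType ⊕ t.Branch) → ℕ)
    (h1 : ∀ u v, t.treeAdj u v → c (Sum.inl u) ≠ c (Sum.inl v))
    (h2 : ∀ b u, t.onBranch b u → c (Sum.inl u) ≠ c (Sum.inr b)) :
    ∀ y z, t.realization.Adj y z → c y ≠ c z := by
  intro y z hadj
  rw [realization, SimpleGraph.fromRel_adj] at hadj
  obtain ⟨hne, h | h⟩ := hadj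
  · rcases y with u | b <;> rcases z with v | b'
    · exact h1 u v h
    · exact (h2 b' u h).symm.symm
    · exact (h2 b v h).symm
    · exact absurd h (by exact id)
  · rcases y with u | b <;> rcases z with v | b'
    · exact (h1 v u h).symm
    · exact h2 b' u h
    · exact (h2 b v h).symm
    · exact absurd h (by exact id)

lemma level_buildTree_le : ∀ (R : List (Σ V : Type, SimpleGraph V)) (u : (buildTree R).NodeType),
    (buildTree R).level u ≤ R.length + 1 := by
  intro R
  induction R with
  | nil => intro u; exact le_refl 1 |>.trans (by omega)
  | cons p R ih =>
    obtain ⟨ι, g⟩ := p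
    rintro (u | ⟨i, w⟩)
    · simp [buildTree, level]
    · have := ih w
      simp only [buildTree, level, List.length_cons]
      omega

lemma level_buildTree_pos : ∀ (R : List (Σ V : Type, SimpleGraph V)) (u : (buildTree R).NodeType),
    1 ≤ (buildTree R).level u := by
  intro R
  cases R with
  | nil => intro u; exact le_refl 1
  | cons p R =>
    obtain ⟨ι, g⟩ := p
    rintro (u | ⟨i, w⟩)
    · exact le_refl 1
    · simp [buildTree, level]

end STree

lemma diag_all : ∀ (n : ℕ) (v : ℕ → ℕ), (∀ t, t < n → v t < t + 1 ∨ n ≤ v t) →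
    (∀ w, w < n → ∃ t, t < n ∧ v t = w) → ∀ t, t < n → v t = t := by
  intro n
  induction n with
  | zero => intro v _ _ t ht; omega
  | succ n ih =>
    intro v hb hsurj
    have hn : v n = n := by
      obtain ⟨t, ht, hvt⟩ := hsurj n (Nat.lt_succ_self n)
      have h2 : t = n := by rcases hb t ht with h | h <;> omega
      rw [h2] at hvt; exact hvt
    have key : ∀ t, t < n → v t = t := by
      apply ih
      · intro t ht
        rcases hb t (by omega) with h | h
        · exact Or.inl h
        · right; omega
      · intro w hw
        obtain ⟨t, ht, hvt⟩ := hsurj w (by omega)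
        refine ⟨t, ?_, hvt⟩
        rcases Nat.lt_succ_iff_lt_or_eq.mp ht with h | h
        · exact h
        · exfalso; rw [h, hn] at hvt; omega
    intro t ht
    rcases Nat.lt_succ_iff_lt_or_eq.mp ht with h | h
    · exact key t h
    · rw [h]; exact hn

lemma free_color (n : ℕ) (v : ℕ → ℕ) (hb : ∀ t, t < n → v t < t + 1 ∨ n ≤ v t)
    (hne : ∃ t, t < n ∧ v t ≠ t) : ∃ w, w < n ∧ ∀ t, t < n → v t ≠ w := by
  by_contra hc
  push_neg at hc
  obtain ⟨t, ht, hvt⟩ := hne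
  exact hvt (diag_all n v hb hc t ht)

lemma exists_not_mem_list (l : List ℕ) : ∃ w, w ≤ l.length ∧ w ∉ l := by
  by_contra h
  push_neg at h
  have hsub : Finset.range (l.length + 1) ⊆ l.toFinset := by
    intro w hw
    rw [Finset.mem_range] at hw
    rw [List.mem_toFinset]
    exact h w (by omega)
  have h1 := Finset.card_le_card hsub
  rw [Finset.card_range] at h1
  have h2 := l.toFinset_card_le
  omega
def Hyp (L : List (Σ V : Type, SimpleGraph V)) (s : ℕ) : Prop :=
  ∀ (j : ℕ) (h : j < L.length) (w : (L[j]'h).1),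
    ∃ χ : (L[j]'h).1 → ℕ,
      (∀ a b, (L[j]'h).2.Adj a b → χ a ≠ χ b) ∧
      (∀ a, χ a ≤ s + j + 1) ∧ χ w = s + j + 1 ∧ (∀ a, χ a = s + j + 1 → a = w)

lemma assemble (ι : Type) (g : SimpleGraph ι) (R : List (Σ V : Type, SimpleGraph V))
    (anc : List ℕ) (r : ℕ)
    (x : Option ((buildTree (⟨ι, g⟩ :: R)).NodeType ⊕ (buildTree (⟨ι, g⟩ :: R)).Branch))
    (rootc : ℕ)
    (cc : ι → ((buildTree R).NodeType ⊕ (buildTree R).Branch) → ℕ)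
    (H1 : ∀ i, ∀ y z, (buildTree R).realization.Adj y z → cc i y ≠ cc i z)
    (HS : ∀ i j, g.Adj i j →
        cc i (Sum.inl (buildTree R).root) ≠ cc j (Sum.inl (buildTree R).root))
    (H6 : ∀ i b a, (a ∈ anc ∨ a = rootc) → cc i (Sum.inr b) ≠ a)
    (H5 : ∀ i u, x ≠ some (Sum.inl (Sum.inr ⟨i, u⟩)) →
        cc i (Sum.inl u) < anc.length + 1 + (buildTree R).level u)
    (Hbnd2 : ∀ i b, x ≠ some (Sum.inr ⟨i, b⟩) →
        cc i (Sum.inr b) ≤ anc.length + R.length + 1)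
    (Htop1 : ∀ i u, x = some (Sum.inl (Sum.inr ⟨i, u⟩)) →
        cc i (Sum.inl u) = anc.length + R.length + 2)
    (Htop2 : ∀ i b, x = some (Sum.inr ⟨i, b⟩) →
        cc i (Sum.inr b) = anc.length + R.length + 2)
    (HtopRoot : x = some (Sum.inl (Sum.inl PUnit.unit)) → rootc = anc.length + R.length + 2)
    (HR : x ≠ some (Sum.inl (Sum.inl PUnit.unit)) → rootc = r)
    (Hr : r ≤ anc.length)
    (H7 : ∀ i b, x = some (Sum.inr ⟨i, b⟩) → rootc = anc.length ∧
        ∀ u, (buildTree R).onBranch b u →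
          cc i (Sum.inl u) + 1 = anc.length + 1 + (buildTree R).level u) :
    ∃ c : ((buildTree (⟨ι, g⟩ :: R)).NodeType ⊕ (buildTree (⟨ι, g⟩ :: R)).Branch) → ℕ,
      (∀ y z, (buildTree (⟨ι, g⟩ :: R)).realization.Adj y z → c y ≠ c z) ∧
      (x ≠ some (Sum.inl (buildTree (⟨ι, g⟩ :: R)).root) →
        c (Sum.inl (buildTree (⟨ι, g⟩ :: R)).root) = r) ∧
      (∀ x₀, x = some x₀ → c x₀ = anc.length + (⟨ι, g⟩ :: R : List (Σ V : Type, SimpleGraph V)).length + 1 ∧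
        ∀ y, y ≠ x₀ → c y ≤ anc.length + (⟨ι, g⟩ :: R : List (Σ V : Type, SimpleGraph V)).length) ∧
      (x = none → ∀ y, c y ≤ anc.length + (⟨ι, g⟩ :: R : List (Σ V : Type, SimpleGraph V)).length) ∧
      (∀ u, x ≠ some (Sum.inl u) →
        c (Sum.inl u) < anc.length + (buildTree (⟨ι, g⟩ :: R)).level u) ∧
      (∀ b a, a ∈ anc → c (Sum.inr b) ≠ a) ∧
      (∀ b, x = some (Sum.inr b) → ∀ u, (buildTree (⟨ι, g⟩ :: R)).onBranch b u →
        c (Sum.inl u) + 1 = anc.length + (buildTree (⟨ι, g⟩ :: R)).level u) := by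
  refine ⟨fun y => match y with
    | Sum.inl (Sum.inl _) => rootc
    | Sum.inl (Sum.inr ⟨i, u⟩) => cc i (Sum.inl u)
    | Sum.inr ⟨i, b⟩ => cc i (Sum.inr b), ?_, ?_, ?_, ?_, ?_, ?_, ?_⟩
  · apply STree.properOfRel
    · rintro (u | ⟨i, u'⟩) (v | ⟨j, v'⟩) h
      · exact absurd h id
      · exact absurd h id
      · exact absurd h id
      · rcases h with ⟨heq, h'⟩ | ⟨hadj, hu, hv⟩
        · subst heq
          exact H1 i _ _ (STree.adj_of_treeAdj _ h')
        · subst hu; subst hv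
          exact HS i j hadj
    · rintro ⟨i, b'⟩ (u | ⟨j, w⟩) h
      · exact (H6 i b' rootc (Or.inr rfl)).symm
      · obtain ⟨heq, h'⟩ := h
        subst heq
        exact H1 j _ _ (STree.adj_of_onBranch _ h')
  · intro hx
    exact HR hx
  · rintro x₀ hx
    constructor
    · rcases x₀ with (u | ⟨i, u⟩) | ⟨i, b⟩
      · show rootc = _
        have := HtopRoot (by cases u; exact hx)
        simp only [List.length_cons]
        omega
      · show cc i (Sum.inl u) = _
        have := Htop1 i u hx
        simp only [List.length_cons]
        omega
      · show cc i (Sum.inr b) = _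
        have := Htop2 i b hx
        simp only [List.length_cons]
        omega
    · rintro ((u | ⟨i, u⟩) | ⟨i, b⟩) hy
      · show rootc ≤ _
        cases u
        have hne : x ≠ some (Sum.inl (Sum.inl PUnit.unit)) := by
          rw [hx]; intro hc; exact hy (Option.some.inj hc).symm
        have := HR hne
        simp only [List.length_cons]
        omega
      · show cc i (Sum.inl u) ≤ _
        have hne : x ≠ some (Sum.inl (Sum.inr ⟨i, u⟩)) := by
          rw [hx]; intro hc; exact hy (Option.some.inj hc).symm
        have h5 := H5 i u hne
        have hl := STree.level_buildTree_le R u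
        simp only [List.length_cons]
        omega
      · show cc i (Sum.inr b) ≤ _
        have hne : x ≠ some (Sum.inr ⟨i, b⟩) := by
          rw [hx]; intro hc; exact hy (Option.some.inj hc).symm
        have := Hbnd2 i b hne
        simp only [List.length_cons]
        omega
  · rintro hx ((u | ⟨i, u⟩) | ⟨i, b⟩)
    · show rootc ≤ _
      have := HR (by rw [hx]; exact (fun h => nomatch h))
      simp only [List.length_cons]
      omega
    · show cc i (Sum.inl u) ≤ _
      have h5 := H5 i u (by rw [hx]; exact (fun h => nomatch h))
      have hl := STree.level_buildTree_le R u
      simp only [List.length_cons]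
      omega
    · show cc i (Sum.inr b) ≤ _
      have := Hbnd2 i b (by rw [hx]; exact (fun h => nomatch h))
      simp only [List.length_cons]
      omega
  · rintro (u | ⟨i, u⟩) hx5
    · show rootc < anc.length + 1
      cases u
      have := HR hx5
      omega
    · show cc i (Sum.inl u) < anc.length + ((buildTree R).level u + 1)
      have := H5 i u hx5
      omega
  · rintro ⟨i, b'⟩ a ha
    exact H6 i b' a (Or.inl ha)
  · rintro ⟨i₀, b₀⟩ hb (u | ⟨j, w⟩) hu
    · show rootc + 1 = anc.length + 1
      have := (H7 i₀ b₀ hb).1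
      omega
    · obtain ⟨heq, hu'⟩ := hu
      subst heq
      show cc j (Sum.inl w) + 1 = anc.length + ((buildTree R).level w + 1)
      have := (H7 j b₀ hb).2 w hu'
      omega
lemma key : ∀ (L : List (Σ V : Type, SimpleGraph V)) (anc : List ℕ) (r : ℕ)
    (x : Option ((buildTree L).NodeType ⊕ (buildTree L).Branch)),
    Hyp L anc.length →
    (∀ t (h : t < anc.length), anc[t]'h < t + 1 ∨ anc.length + L.length < anc[t]'h) →
    r ≤ anc.length →
    (x = none → (∃ t, ∃ h : t < anc.length, anc[t]'h ≠ t) ∨ r < anc.length) →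
    (∀ b, x = some (Sum.inr b) → r = anc.length ∧ ∀ t (h : t < anc.length), anc[t]'h < anc.length) →
    ∃ c : ((buildTree L).NodeType ⊕ (buildTree L).Branch) → ℕ,
      (∀ y z, (buildTree L).realization.Adj y z → c y ≠ c z) ∧
      (x ≠ some (Sum.inl (buildTree L).root) → c (Sum.inl (buildTree L).root) = r) ∧
      (∀ x₀, x = some x₀ → c x₀ = anc.length + L.length + 1 ∧
        ∀ y, y ≠ x₀ → c y ≤ anc.length + L.length) ∧
      (x = none → ∀ y, c y ≤ anc.length + L.length) ∧
      (∀ u, x ≠ some (Sum.inl u) → c (Sum.inl u) < anc.length + (buildTree L).level u) ∧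
      (∀ b a, a ∈ anc → c (Sum.inr b) ≠ a) ∧
      (∀ b, x = some (Sum.inr b) → ∀ u, (buildTree L).onBranch b u →
        c (Sum.inl u) + 1 = anc.length + (buildTree L).level u) := by
  intro L
  induction L with
  | nil =>
    intro anc r x hH hanc hr hnone hbr
    rcases x with _ | (u | b₀)
    · -- x = none
      have hfc : ∃ w, w < anc.length + 1 ∧
          ∀ t, t < anc.length + 1 → (if h : t < anc.length then anc[t]'h else r) ≠ w := by
        apply free_color
        · intro t ht
          by_cases h : t < anc.length
          · rw [dif_pos h]
            rcases hanc t h with h' | h'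
            · exact Or.inl h'
            · right; simp only [List.length_nil] at h'; omega
          · rw [dif_neg h]
            left; omega
        · rcases hnone rfl with ⟨t, h, ht⟩ | h
          · exact ⟨t, by omega, by rw [dif_pos h]; exact ht⟩
          · exact ⟨anc.length, by omega, by rw [dif_neg (lt_irrefl _)]; omega⟩
      obtain ⟨w, hw, hfree⟩ := hfc
      refine ⟨fun y => match y with
        | Sum.inl _ => r
        | Sum.inr _ => w, ?_, ?_, ?_, ?_, ?_, ?_, ?_⟩
      · apply STree.properOfRel
        · intro u v h; exact absurd h id
        · intro b u _
          show r ≠ w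
          have := hfree anc.length (by omega)
          rw [dif_neg (lt_irrefl _)] at this
          exact this
      · intro _; rfl
      · intro x₀ hx; exact nomatch hx
      · rintro _ (u | b)
        · show r ≤ _; simp only [List.length_nil]; omega
        · show w ≤ _; simp only [List.length_nil]; omega
      · intro u _
        show r < anc.length + 1
        omega
      · intro b a ha
        obtain ⟨t, h, ht⟩ := List.mem_iff_getElem.mp ha
        have := hfree t (by omega)
        rw [dif_pos h] at this
        show w ≠ a
        rw [← ht]
        exact fun hc => this hc.symm
      · intro b hb; exact nomatch hb
    · -- x = some (inl u), u : PUnit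
      cases u
      obtain ⟨w, hw, hwm⟩ := exists_not_mem_list anc
      refine ⟨fun y => match y with
        | Sum.inl _ => anc.length + 1
        | Sum.inr _ => w, ?_, ?_, ?_, ?_, ?_, ?_, ?_⟩
      · apply STree.properOfRel
        · intro u v h; exact absurd h id
        · intro b u _
          show anc.length + 1 ≠ w
          omega
      · intro hx; exact absurd rfl hx
      · intro x₀ hx
        rw [Option.some.injEq] at hx
        subst hx
        constructor
        · show anc.length + 1 = _; simp only [List.length_nil]
        · rintro (u | b) hy
          · cases u; exact absurd rfl hy
          · show w ≤ _; simp only [List.length_nil]; omega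
      · intro hx; exact nomatch hx
      · intro u h5
        cases u
        exact absurd rfl h5
      · intro b a ha
        show w ≠ a
        intro hc; subst hc; exact hwm ha
      · intro b hb
        rw [Option.some.injEq] at hb
        exact nomatch hb
    · -- x = some (inr b₀)
      obtain ⟨hr2, hanc2⟩ := hbr b₀ rfl
      refine ⟨fun y => match y with
        | Sum.inl _ => r
        | Sum.inr _ => anc.length + 1, ?_, ?_, ?_, ?_, ?_, ?_, ?_⟩
      · apply STree.properOfRel
        · intro u v h; exact absurd h id
        · intro b u _
          show r ≠ anc.length + 1
          omega
      · intro _; rfl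
      · intro x₀ hx
        rw [Option.some.injEq] at hx
        subst hx
        constructor
        · show anc.length + 1 = _; simp only [List.length_nil]
        · rintro (u | b) hy
          · show r ≤ _; simp only [List.length_nil]; omega
          · cases b; cases b₀; exact absurd rfl hy
      · intro hx; exact nomatch hx
      · intro u _
        show r < anc.length + 1
        omega
      · intro b a ha
        obtain ⟨t, h, ht⟩ := List.mem_iff_getElem.mp ha
        have := hanc2 t h
        show anc.length + 1 ≠ a
        omega
      · intro b hb u hu
        show r + 1 = anc.length + 1
        omega
  | cons p R ih =>
    intro anc r x hH hanc hr hnone hbr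
    obtain ⟨ι, g⟩ := p
    classical
    have hHR : ∀ rootc : ℕ, Hyp R (anc ++ [rootc]).length := by
      intro rootc j h w
      have h' : j + 1 < (⟨ι, g⟩ :: R : List (Σ V : Type, SimpleGraph V)).length := by
        simp only [List.length_cons]; omega
      obtain ⟨χ, h1, h2, h3, h4⟩ := hH (j + 1) h' w
      refine ⟨χ, h1, ?_, ?_, ?_⟩
      · intro a
        have := h2 a
        simp only [List.length_append, List.length_cons, List.length_nil]
        omega
      · have := h3
        simp only [List.length_append, List.length_cons, List.length_nil]
        omega
      · intro a ha
        apply h4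
        simp only [List.length_append, List.length_cons, List.length_nil] at ha
        omega
    have hancApp : ∀ rootc : ℕ, (rootc ≤ anc.length ∨ rootc = anc.length + R.length + 2) →
        ∀ (t : ℕ) (h : t < (anc ++ [rootc]).length),
          (anc ++ [rootc])[t]'h < t + 1 ∨
          (anc ++ [rootc]).length + R.length < (anc ++ [rootc])[t]'h := by
      intro rootc hrc t h
      simp only [List.length_append, List.length_cons, List.length_nil] at h ⊢
      by_cases h' : t < anc.length
      · rw [List.getElem_append_left h']
        rcases hanc t h' with h2 | h2
        · exact Or.inl h2
        · right
          simp only [List.length_cons] at h2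
          omega
      · have ht : t = anc.length := by omega
        subst ht
        rw [List.getElem_concat_length rfl]
        rcases hrc with h2 | h2
        · left; omega
        · right; omega
    have hmemApp : ∀ (rootc a : ℕ), (a ∈ anc ∨ a = rootc) → a ∈ anc ++ [rootc] := by
      intro rootc a ha
      rcases ha with ha | ha
      · exact List.mem_append_left _ ha
      · rw [ha]; exact List.mem_append_right _ (by simp)
    have hχany : ∃ χ : ι → ℕ, (∀ a b, g.Adj a b → χ a ≠ χ b) ∧ (∀ a, χ a ≤ anc.length + 1) := by
      rcases isEmpty_or_nonempty ι with hE | hN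
      · exact ⟨fun _ => 0, fun a => (hE.false a).elim, fun a => (hE.false a).elim⟩
      · obtain ⟨χ, h1, h2, _, _⟩ := hH 0 (by simp) (Classical.arbitrary ι)
        exact ⟨χ, h1, fun a => by have := h2 a; omega⟩
    rcases x with _ | ((u | ⟨i₀, u₀⟩) | ⟨i₀, b₀⟩)
    · -- x = none
      obtain ⟨χ, hχp, hχb⟩ := hχany
      have hch := fun i : ι => ih (anc ++ [r]) (χ i) none (hHR r) (hancApp r (Or.inl hr))
        (by have := hχb i
            simp only [List.length_append, List.length_cons, List.length_nil]
            omega)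
        (by intro _
            left
            rcases hnone rfl with ⟨t, h, ht⟩ | hlt
            · refine ⟨t, by simp only [List.length_append, List.length_cons, List.length_nil]; omega, ?_⟩
              rw [List.getElem_append_left h]
              exact ht
            · refine ⟨anc.length, by simp only [List.length_append, List.length_cons, List.length_nil]; omega, ?_⟩
              rw [List.getElem_concat_length rfl]
              omega)
        (fun b hb => nomatch hb)
      choose cc hc1 hc2 hc3 hc4 hc5 hc6 hc7 using hch
      refine assemble ι g R anc r none r cc hc1 ?_ ?_ ?_ ?_ ?_ ?_ ?_ (fun _ => rfl) hr ?_
      · intro i j hadj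
        rw [hc2 i (fun h => nomatch h), hc2 j (fun h => nomatch h)]
        exact hχp i j hadj
      · intro i b a ha
        exact hc6 i b a (hmemApp r a ha)
      · intro i u _
        have := hc5 i u (fun h => nomatch h)
        simp only [List.length_append, List.length_cons, List.length_nil] at this
        omega
      · intro i b _
        have := hc4 i rfl (Sum.inr b)
        simp only [List.length_append, List.length_cons, List.length_nil] at this
        omega
      · intro i u h; exact nomatch h
      · intro i b h; exact nomatch h
      · intro h; exact nomatch h
      · intro i b h; exact nomatch h
    · -- x = some (inl (inl u)) : root designated
      cases u
      obtain ⟨χ, hχp, hχb⟩ := hχany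
      have hch := fun i : ι => ih (anc ++ [anc.length + R.length + 2]) (χ i) none
        (hHR _) (hancApp _ (Or.inr rfl))
        (by have := hχb i
            simp only [List.length_append, List.length_cons, List.length_nil]
            omega)
        (by intro _
            left
            refine ⟨anc.length, by simp only [List.length_append, List.length_cons, List.length_nil]; omega, ?_⟩
            rw [List.getElem_concat_length rfl]
            omega)
        (fun b hb => nomatch hb)
      choose cc hc1 hc2 hc3 hc4 hc5 hc6 hc7 using hch
      refine assemble ι g R anc r _ (anc.length + R.length + 2) cc hc1 ?_ ?_ ?_ ?_ ?_ ?_ (fun _ => rfl) ?_ hr ?_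
      · intro i j hadj
        rw [hc2 i (fun h => nomatch h), hc2 j (fun h => nomatch h)]
        exact hχp i j hadj
      · intro i b a ha
        exact hc6 i b a (hmemApp _ a ha)
      · intro i u _
        have := hc5 i u (fun h => nomatch h)
        simp only [List.length_append, List.length_cons, List.length_nil] at this
        omega
      · intro i b _
        have := hc4 i rfl (Sum.inr b)
        simp only [List.length_append, List.length_cons, List.length_nil] at this
        omega
      · intro i u h; exact absurd h (fun h => nomatch h)
      · intro i b h; exact absurd h (by simp)
      · intro hx; exact absurd rfl hx
      · intro i b h; exact absurd h (by simp)
    · -- x = some (inl (inr ⟨i₀, u₀⟩)) : designated node in child i₀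
      obtain ⟨χ, hχp, hχb, hχt, hχu⟩ := hH 0 (by simp) i₀
      have hch := fun i : ι => ih (anc ++ [r]) (χ i)
        (if i = i₀ then some (Sum.inl u₀) else none) (hHR r) (hancApp r (Or.inl hr))
        (by have := hχb i
            simp only [List.length_append, List.length_cons, List.length_nil]
            omega)
        (by intro hni
            by_cases hi : i = i₀
            · rw [if_pos hi] at hni; exact nomatch hni
            · right
              have h1 := hχb i
              have h2 : χ i ≠ anc.length + 0 + 1 := fun hc => hi (hχu i hc)
              simp only [List.length_append, List.length_cons, List.length_nil]
              omega)
        (by intro b hb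
            by_cases hi : i = i₀
            · rw [if_pos hi] at hb
              rw [Option.some.injEq] at hb
              exact nomatch hb
            · rw [if_neg hi] at hb
              exact nomatch hb)
      choose cc hc1 hc2 hc3 hc4 hc5 hc6 hc7 using hch
      refine assemble ι g R anc r _ r cc hc1 ?_ ?_ ?_ ?_ ?_ ?_ ?_ (fun _ => rfl) hr ?_
      · intro i j hadj
        have heff : ∀ k : ι, cc k (Sum.inl (buildTree R).root) = χ k ∨
            (k = i₀ ∧ cc k (Sum.inl (buildTree R).root) = anc.length + R.length + 2) := by
          intro k
          by_cases hk : k = i₀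
          · by_cases hu : (Sum.inl u₀ : (buildTree R).NodeType ⊕ (buildTree R).Branch) =
                Sum.inl (buildTree R).root
            · right
              refine ⟨hk, ?_⟩
              have h3 := (hc3 k (Sum.inl u₀) (by rw [if_pos hk])).1
              rw [hu] at h3
              simp only [List.length_append, List.length_cons, List.length_nil] at h3
              omega
            · left
              refine hc2 k ?_
              rw [if_pos hk]
              intro hc
              rw [Option.some.injEq] at hc
              exact hu hc
          · left
            refine hc2 k ?_
            rw [if_neg hk]
            exact fun h => nomatch h
        have hne := hadj.ne
        rcases heff i with hi | ⟨hi1, hi2⟩ <;> rcases heff j with hj | ⟨hj1, hj2⟩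
        · rw [hi, hj]; exact hχp i j hadj
        · rw [hi, hj2]
          have := hχb i
          omega
        · rw [hi2, hj]
          have := hχb j
          omega
        · exact absurd (hi1.trans hj1.symm) hne
      · intro i b a ha
        exact hc6 i b a (hmemApp r a ha)
      · intro i u hne5
        have hx5 : (if i = i₀ then some (Sum.inl u₀) else none) ≠
            some (Sum.inl u : (buildTree R).NodeType ⊕ (buildTree R).Branch) := by
          by_cases hi : i = i₀
          · rw [if_pos hi]
            intro hc
            rw [Option.some.injEq, Sum.inl.injEq] at hc
            subst hc
            exact hne5 (by rw [hi]; rfl)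
          · rw [if_neg hi]
            exact fun h => nomatch h
        have := hc5 i u hx5
        simp only [List.length_append, List.length_cons, List.length_nil] at this
        omega
      · intro i b _
        by_cases hi : i = i₀
        · have := (hc3 i (Sum.inl u₀) (by rw [if_pos hi])).2 (Sum.inr b)
            (fun hc => nomatch hc)
          simp only [List.length_append, List.length_cons, List.length_nil] at this
          omega
        · have := hc4 i (by rw [if_neg hi]) (Sum.inr b)
          simp only [List.length_append, List.length_cons, List.length_nil] at this
          omega
      · intro i u heq
        injection heq with heq
        injection heq with heq
        injection heq with heq
        injection heq with h1 h2
        subst h1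
        subst h2
        have := (hc3 i₀ (Sum.inl u₀) (by rw [if_pos rfl])).1
        simp only [List.length_append, List.length_cons, List.length_nil] at this
        omega
      · intro i b heq; exact absurd heq (by simp)
      · intro heq; exact absurd heq (fun h => nomatch h)
      · intro i b heq; exact absurd heq (by simp)
    · -- x = some (inr ⟨i₀, b₀⟩) : designated branch
      obtain ⟨hreq, hanclt⟩ := hbr ⟨i₀, b₀⟩ rfl
      obtain ⟨χ, hχp, hχb, hχt, hχu⟩ := hH 0 (by simp) i₀
      have hch := fun i : ι => ih (anc ++ [r]) (χ i)
        (if i = i₀ then some (Sum.inr b₀) else none) (hHR r) (hancApp r (Or.inl hr))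
        (by have := hχb i
            simp only [List.length_append, List.length_cons, List.length_nil]
            omega)
        (by intro hni
            by_cases hi : i = i₀
            · rw [if_pos hi] at hni; exact nomatch hni
            · right
              have h1 := hχb i
              have h2 : χ i ≠ anc.length + 0 + 1 := fun hc => hi (hχu i hc)
              simp only [List.length_append, List.length_cons, List.length_nil]
              omega)
        (by intro b hb
            by_cases hi : i = i₀
            · rw [if_pos hi] at hb
              rw [Option.some.injEq, Sum.inr.injEq] at hb
              subst hb
              constructor
              · have := hχt
                rw [hi]
                simp only [List.length_append, List.length_cons, List.length_nil]
                omega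
              · intro t h
                simp only [List.length_append, List.length_cons, List.length_nil] at h ⊢
                by_cases h' : t < anc.length
                · rw [List.getElem_append_left h']
                  have := hanclt t h'
                  omega
                · have ht : t = anc.length := by omega
                  subst ht
                  rw [List.getElem_concat_length rfl]
                  omega
            · rw [if_neg hi] at hb
              exact nomatch hb)
      choose cc hc1 hc2 hc3 hc4 hc5 hc6 hc7 using hch
      refine assemble ι g R anc r _ r cc hc1 ?_ ?_ ?_ ?_ ?_ ?_ ?_ (fun _ => rfl) hr ?_
      · intro i j hadj
        have heff : ∀ k : ι, cc k (Sum.inl (buildTree R).root) = χ k := by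
          intro k
          refine hc2 k ?_
          by_cases hk : k = i₀
          · rw [if_pos hk]
            intro hc
            rw [Option.some.injEq] at hc
            exact nomatch hc
          · rw [if_neg hk]
            exact fun h => nomatch h
        rw [heff i, heff j]
        exact hχp i j hadj
      · intro i b a ha
        exact hc6 i b a (hmemApp r a ha)
      · intro i u _
        have hx5 : (if i = i₀ then some (Sum.inr b₀) else none) ≠
            some (Sum.inl u : (buildTree R).NodeType ⊕ (buildTree R).Branch) := by
          by_cases hi : i = i₀
          · rw [if_pos hi]
            intro hc
            rw [Option.some.injEq] at hc
            exact nomatch hc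
          · rw [if_neg hi]
            exact fun h => nomatch h
        have := hc5 i u hx5
        simp only [List.length_append, List.length_cons, List.length_nil] at this
        omega
      · intro i b hneb
        by_cases hi : i = i₀
        · have hbb : (Sum.inr b : (buildTree R).NodeType ⊕ (buildTree R).Branch) ≠ Sum.inr b₀ := by
            intro hc
            rw [Sum.inr.injEq] at hc
            subst hc
            exact hneb (by rw [hi])
          have := (hc3 i (Sum.inr b₀) (by rw [if_pos hi])).2 (Sum.inr b) hbb
          simp only [List.length_append, List.length_cons, List.length_nil] at this
          omega
        · have := hc4 i (by rw [if_neg hi]) (Sum.inr b)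
          simp only [List.length_append, List.length_cons, List.length_nil] at this
          omega
      · intro i u heq; exact absurd heq (fun h => nomatch h)
      · intro i b heq
        injection heq with heq
        injection heq with heq
        injection heq with h1 h2
        subst h1
        subst h2
        have := (hc3 i₀ (Sum.inr b₀) (by rw [if_pos rfl])).1
        simp only [List.length_append, List.length_cons, List.length_nil] at this
        omega
      · intro heq; exact absurd heq (fun h => nomatch h)
      · intro i b heq
        injection heq with heq
        injection heq with heq
        injection heq with h1 h2
        subst h1
        subst h2
        refine ⟨hreq, ?_⟩
        intro u hu
        have := hc7 i₀ b₀ (by rw [if_pos rfl]) u hu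
        simp only [List.length_append, List.length_cons, List.length_nil] at this
        omega
lemma twincutList_length : ∀ m, (twincutList m).length = m := by
  intro m
  induction m with
  | zero => rfl
  | succ m ih => simp [twincutList, ih]

lemma twincutList_get : ∀ m j (h : j < (twincutList m).length),
    (twincutList m)[j]'h = realizationSigma (buildTree (twincutList j)) := by
  intro m
  induction m with
  | zero => intro j h; simp [twincutList] at h
  | succ m ih =>
    intro j h
    show (twincutList m ++ [realizationSigma (buildTree (twincutList m))])[j]'_ = _
    by_cases h' : j < (twincutList m).length
    · refine (List.getElem_append_left h').trans ?_
      exact ih j h'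
    · have hj : j = (twincutList m).length := by
        simp only [twincutList, List.length_append, List.length_cons, List.length_nil] at h
        omega
      subst hj
      simp only [List.getElem_concat_length, twincutList_length]

lemma hypT : ∀ m, Hyp (twincutList m) 0 := by
  intro m
  induction m using Nat.strong_induction_on with
  | _ m ih =>
    intro j h w
    have hj : j < m := by have := twincutList_length m; omega
    have hget : (twincutList m)[j]'h = realizationSigma (buildTree (twincutList j)) :=
      twincutList_get m j h
    revert w
    rw [hget]
    intro w
    obtain ⟨c, hc1, hc2, hc3, hc4, hc5, hc6, hc7⟩ := key (twincutList j) [] 0 (some w)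
      (ih j hj) (by intro t ht; simp at ht) (le_refl 0)
      (by intro hx; exact nomatch hx)
      (by intro b hb; exact ⟨rfl, by intro t ht; simp at ht⟩)
    obtain ⟨hw, hbd⟩ := hc3 w rfl
    have hlen := twincutList_length j
    simp only [List.length_nil] at hw
    refine ⟨c, hc1, ?_, ?_, ?_⟩
    · intro a
      by_cases ha : a = w
      · subst ha; omega
      · have := hbd a ha
        simp only [List.length_nil] at this
        omega
    · omega
    · intro a ha
      by_cases h' : a = w
      · exact h'
      · exfalso
        have := hbd a h'
        simp only [List.length_nil] at this
        omega
/-- for every branch vertex `b` of `G_k` (`k = m + 2`), there is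
a proper `k`-coloring in which `b` is the only vertex with the last color and
the tree node at level `i` on the branch `b` gets color `i` (colors being
`1, …, k`, represented by `Fin k` shifted by one). -/
theorem twincut_coloring_branch (m : ℕ) (b : (twincutTree m).Branch) :
    ∃ c : ((twincutTree m).NodeType ⊕ (twincutTree m).Branch) → Fin (m + 2),
      (∀ x y, (twincutTree m).realization.Adj x y → c x ≠ c y) ∧
      c (Sum.inr b) = Fin.last (m + 1) ∧
      (∀ x, c x = Fin.last (m + 1) → x = Sum.inr b) ∧
      (∀ u : (twincutTree m).NodeType, (twincutTree m).onBranch b u →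
        (c (Sum.inl u)).val + 1 = (twincutTree m).level u) := by
  obtain ⟨c, hc1, hc2, hc3, hc4, hc5, hc6, hc7⟩ := key (twincutList m) [] 0 (some (Sum.inr b))
    (hypT m) (by intro t ht; simp at ht) (le_refl 0)
    (by intro hx; exact nomatch hx)
    (by intro b' hb'; exact ⟨rfl, by intro t ht; simp at ht⟩)
  obtain ⟨htop, hbd⟩ := hc3 (Sum.inr b) rfl
  have hlen := twincutList_length m
  simp only [List.length_nil] at htop
  have hbound : ∀ y, c y < m + 2 := by
    intro y
    by_cases hy : y = Sum.inr b
    · subst hy; exact lt_of_eq_of_lt htop (by omega)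
    · have := hbd y hy
      simp only [List.length_nil] at this
      omega
  refine ⟨fun y => ⟨c y, hbound y⟩, ?_, ?_, ?_, ?_⟩
  · intro y z hadj hcc
    exact hc1 y z hadj (congrArg Fin.val hcc)
  · apply Fin.ext
    show c (Sum.inr b) = (Fin.last (m + 1)).val
    simp only [Fin.val_last]
    omega
  · intro y hy
    by_contra hne
    have hv := congrArg Fin.val hy
    simp only [Fin.val_last] at hv
    have := hbd y hne
    simp only [List.length_nil] at this
    have hv' : c y = m + 1 := hv
    omega
  · intro u hu
    have h7 := hc7 b rfl u hu
    simp only [List.length_nil] at h7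
    show c (Sum.inl u) + 1 = (buildTree (twincutList m)).level u
    omega
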